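/- Let q ∈ ℝ with q ≠ 1, let n ≥ 1 and let x₁, …, xₙ be reals with 1 + (q−1)xᵢ ≥ 0 for every i and 1 + (q−1)·∑ᵢ xᵢ ≥ 0. Then (∏ᵢ₌₁ⁿ exp_q xᵢ)^{q−1} = (exp_q(∑ᵢ₌₁ⁿ xᵢ))^{q−1} + ∑_{j=2}^{n} (q−1)^j · e_j(x₁,…,xₙ). -/

import Mathlib

/-- The q-exponential: for `q ≠ 1`, `exp_q z = (max(1 + (q-1)z, 0))^(1/(q-1))`. -/
noncomputable def qexp (q z : ℝ) : ℝ := (max (1 + (q - 1) * z) 0) ^ (1 / (q - 1))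

/-- The j-th elementary symmetric polynomial `e_j(x₁,…,xₙ) = ∑_{i₁<⋯<i_j} x_{i₁}⋯x_{i_j}`. -/
noncomputable def esymm {n : ℕ} (j : ℕ) (x : Fin n → ℝ) : ℝ :=
  ∑ t ∈ Finset.univ.powersetCard j, ∏ i ∈ t, x i

lemma qexp_rpow (q z : ℝ) (hq : q ≠ 1) (h : 0 ≤ 1 + (q - 1) * z) :
    (qexp q z) ^ (q - 1) = 1 + (q - 1) * z := by
  have hne : q - 1 ≠ 0 := sub_ne_zero.mpr hq
  rw [qexp, max_eq_left h, ← Real.rpow_mul h, one_div_mul_cancel hne, Real.rpow_one]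

/-- Generalized multi-point property of the q-exponential:
`(∏ᵢ exp_q xᵢ)^(q−1) = (exp_q(∑ᵢ xᵢ))^(q−1) + ∑_{j=2}^{n} (q−1)^j · e_j(x₁,…,xₙ)`. -/
theorem qexp_prod_expansion (q : ℝ) (hq : q ≠ 1) (n : ℕ) (hn : 1 ≤ n) (x : Fin n → ℝ)
    (hx : ∀ i, 0 ≤ 1 + (q - 1) * x i) (hsum : 0 ≤ 1 + (q - 1) * ∑ i, x i) :
    (∏ i, qexp q (x i)) ^ (q - 1)
      = (qexp q (∑ i, x i)) ^ (q - 1)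
        + ∑ j ∈ Finset.Icc 2 n, (q - 1) ^ j * esymm j x := by
  have hne : q - 1 ≠ 0 := sub_ne_zero.mpr hq
  -- Left side equals ∏ (1 + (q-1) x i)
  have hL : (∏ i, qexp q (x i)) ^ (q - 1) = ∏ i, (1 + (q - 1) * x i) := by
    have : ∏ i, qexp q (x i) = (∏ i, (1 + (q - 1) * x i)) ^ (1 / (q - 1)) := by
      rw [← Real.finset_prod_rpow _ _ (fun i _ => hx i)]
      refine Finset.prod_congr rfl fun i _ => ?_
      rw [qexp, max_eq_left (hx i)]
    rw [this, ← Real.rpow_mul (Finset.prod_nonneg fun i _ => hx i),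
      one_div_mul_cancel hne, Real.rpow_one]
  rw [hL, qexp_rpow q _ hq hsum]
  -- expand the product
  have hexp : ∏ i, (1 + (q - 1) * x i)
      = ∑ j ∈ Finset.range (n + 1), (q - 1) ^ j * esymm j x := by
    have h1 : ∀ i : Fin n, (1 : ℝ) + (q - 1) * x i = (q - 1) * x i + 1 := by
      intro i; ring
    simp only [h1]
    rw [Finset.prod_add]
    rw [Finset.sum_powerset]
    simp only [Finset.card_univ, Fintype.card_fin]
    refine Finset.sum_congr rfl fun j _ => ?_
    rw [esymm, Finset.mul_sum]
    refine Finset.sum_congr rfl fun t ht => ?_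
    rw [Finset.prod_const_one, mul_one, Finset.prod_mul_distrib, Finset.prod_const,
      (Finset.mem_powersetCard.mp ht).2]
  rw [hexp]
  -- split off j = 0 and j = 1
  have hset : Finset.range (n + 1)
      = insert 0 (insert 1 (Finset.Icc 2 n)) := by
    ext j
    simp only [Finset.mem_range, Finset.mem_insert, Finset.mem_Icc]
    omega
  have e0 : esymm 0 x = 1 := by
    simp [esymm, Finset.powersetCard_zero]
  have e1 : esymm 1 x = ∑ i, x i := by
    rw [esymm, Finset.powersetCard_one, Finset.sum_map]
    simp
  rw [hset, Finset.sum_insert (by simp), Finset.sum_insert (by simp), e0, e1]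
  ring
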